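/- For all s ∈ ℕ, |AP_s| − |E_s| = |sA| − 2|(s−1)A| + |(s−2)A|, where by convention |sA| = 0 for s < 0 (note |0A| = 1). -/

import Mathlib

open scoped BigOperators

namespace SumsetsCurve

/-- The `s`-fold sumset of `A = {a 0, …, a (n-1)}`:
all sums of `s` elements of `A` (with `0A = {0}`). -/
def sumset (n : ℕ) (a : ℕ → ℕ) (s : ℕ) : Set ℕ :=
  {x | ∃ f : Fin s → ℕ, (∀ i, f i < n) ∧ x = ∑ i, a (f i)}

/-- The numerical semigroup (additive submonoid of ℕ) generated by `B`. -/
def numSG (B : Set ℕ) : Set ℕ := (AddSubmonoid.closure B : AddSubmonoid ℕ)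

/-- `S₁`, the numerical semigroup generated by `A`. -/
def S1 (n : ℕ) (a : ℕ → ℕ) : Set ℕ := numSG {x | ∃ i < n, a i = x}

/-- `S₂`, the numerical semigroup generated by `d - A`. -/
def S2 (n d : ℕ) (a : ℕ → ℕ) : Set ℕ := numSG {x | ∃ i < n, d - a i = x}

/-- The conductor of `S ⊆ ℕ`: the least `c` with `c + ℕ ⊆ S`. -/
noncomputable def conductor (S : Set ℕ) : ℕ := sInf {c | ∀ m, c ≤ m → m ∈ S}

/-- The genus of `S ⊆ ℕ`: the number of gaps `|ℕ \ S|`. -/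
noncomputable def genus (S : Set ℕ) : ℕ := Set.ncard {x : ℕ | x ∉ S}

/-- `C = S ∩ [0, conductor S - 2]` (the inequality is taken in ℤ). -/
def Cpart (S : Set ℕ) : Set ℕ := {x | x ∈ S ∧ (x : ℤ) ≤ (conductor S : ℤ) - 2}

/-- The decomposition `sA = C₁ ⊔ [c₁, sd - c₂] ⊔ (sd - C₂)` of the Structure Theorem,
viewed inside ℤ. -/
def structDecomp (n d : ℕ) (a : ℕ → ℕ) (s : ℕ) : Prop :=
  (Nat.cast '' sumset n a s : Set ℤ)
      = (Nat.cast '' Cpart (S1 n a))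
        ∪ Set.Icc ((conductor (S1 n a) : ℤ)) ((s * d : ℤ) - (conductor (S2 n d a) : ℤ))
        ∪ ((fun c => (s * d : ℤ) - c) '' (Nat.cast '' Cpart (S2 n d a)))
    ∧ Disjoint (Nat.cast '' Cpart (S1 n a) : Set ℤ)
        (Set.Icc ((conductor (S1 n a) : ℤ)) ((s * d : ℤ) - (conductor (S2 n d a) : ℤ)))
    ∧ Disjoint (Nat.cast '' Cpart (S1 n a) : Set ℤ)
        ((fun c => (s * d : ℤ) - c) '' (Nat.cast '' Cpart (S2 n d a)))
    ∧ Disjoint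
        (Set.Icc ((conductor (S1 n a) : ℤ)) ((s * d : ℤ) - (conductor (S2 n d a) : ℤ)))
        ((fun c => (s * d : ℤ) - c) '' (Nat.cast '' Cpart (S2 n d a)))

/-- `σ(A)`: the least `σ` such that the Structure Theorem decomposition holds
for all `s ≥ σ`. -/
noncomputable def sigmaA (n d : ℕ) (a : ℕ → ℕ) : ℕ :=
  sInf {σ | ∀ s, σ ≤ s → structDecomp n d a s}

/-- `r(A)`: the least `r` such that `|sA| = sd + 1 - g₁ - g₂` for all `s ≥ r`
(the regularity of the Hilbert function of `k[C_A]`). -/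
noncomputable def rA (n d : ℕ) (a : ℕ → ℕ) : ℕ :=
  sInf {r | ∀ s, r ≤ s →
    ((sumset n a s).ncard : ℤ)
      = (s : ℤ) * d + 1 - genus (S1 n a) - genus (S2 n d a)}

/-- The homogeneous semigroup `S ⊆ ℕ²` generated by `{(a, d-a) : a ∈ A}`. -/
def SS (n d : ℕ) (a : ℕ → ℕ) : Set (ℕ × ℕ) :=
  (AddSubmonoid.closure {p : ℕ × ℕ | ∃ i < n, p = (a i, d - a i)} : AddSubmonoid (ℕ × ℕ))

/-- The Apery set `AP_S = {p ∈ S : p - (0,d) ∉ S, p - (d,0) ∉ S}`. -/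
def APS (n d : ℕ) (a : ℕ → ℕ) : Set (ℕ × ℕ) :=
  {p ∈ SS n d a |
    (¬ ∃ q ∈ SS n d a, q + (0, d) = p) ∧ (¬ ∃ q ∈ SS n d a, q + (d, 0) = p)}

/-- The exceptional set
`E_S = {p ∈ S : p - (0,d) ∈ S, p - (d,0) ∈ S, p - (d,d) ∉ S}`. -/
def ES (n d : ℕ) (a : ℕ → ℕ) : Set (ℕ × ℕ) :=
  {p ∈ SS n d a |
    (∃ q ∈ SS n d a, q + (0, d) = p) ∧ (∃ q ∈ SS n d a, q + (d, 0) = p) ∧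
      (¬ ∃ q ∈ SS n d a, q + (d, d) = p)}

/-- The level `L_s = {(x,y) ∈ ℕ² : x + y = sd}`. -/
def Lev (d s : ℕ) : Set (ℕ × ℕ) := {p | p.1 + p.2 = s * d}

/-- `AP_s = AP_S ∩ L_s`. -/
def APs (n d : ℕ) (a : ℕ → ℕ) (s : ℕ) : Set (ℕ × ℕ) := APS n d a ∩ Lev d s

/-- `E_s = E_S ∩ L_s`. -/
def Es (n d : ℕ) (a : ℕ → ℕ) (s : ℕ) : Set (ℕ × ℕ) := ES n d a ∩ Lev d s

/-- `m(AP_S) = max {s : AP_s ≠ ∅}`. -/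
noncomputable def mAP (n d : ℕ) (a : ℕ → ℕ) : ℕ := sSup {s | APs n d a s ≠ ∅}

/-- The Apery set of `S₁` with respect to `d`: `{x ∈ S₁ : x - d ∉ S₁}`. -/
def Ap1 (n d : ℕ) (a : ℕ → ℕ) : Set ℕ := {x ∈ S1 n a | ¬ ∃ y ∈ S1 n a, y + d = x}

/-- The Apery set of `S₂` with respect to `d`: `{x ∈ S₂ : x - d ∉ S₂}`. -/
def Ap2 (n d : ℕ) (a : ℕ → ℕ) : Set ℕ := {x ∈ S2 n d a | ¬ ∃ y ∈ S2 n d a, y + d = x}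

/-- `G`, the subgroup of ℤ² generated by `S`. -/
def G (n d : ℕ) (a : ℕ → ℕ) : AddSubgroup (ℤ × ℤ) :=
  AddSubgroup.closure {p | ∃ i < n, p = ((a i : ℤ), (d : ℤ) - (a i : ℤ))}

/-- `S₁` viewed inside ℤ. -/
def S1Z (n : ℕ) (a : ℕ → ℕ) : Set ℤ := Nat.cast '' S1 n a

/-- `S₂` viewed inside ℤ. -/
def S2Z (n d : ℕ) (a : ℕ → ℕ) : Set ℤ := Nat.cast '' S2 n d a

/-- `S' = G ∩ (S₁ × S₂)`. -/
def Sprime (n d : ℕ) (a : ℕ → ℕ) : Set (ℤ × ℤ) :=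
  {p | p ∈ G n d a ∧ p.1 ∈ S1Z n a ∧ p.2 ∈ S2Z n d a}

/-- The homogeneous semigroup `S` viewed inside ℤ². -/
def SZ (n d : ℕ) (a : ℕ → ℕ) : Set (ℤ × ℤ) :=
  (fun p : ℕ × ℕ => ((p.1 : ℤ), (p.2 : ℤ))) '' SS n d a


/-- The extended counting function `s ↦ |sA|`, with the convention `|sA| = 0` for `s < 0`. -/
noncomputable def nAZ (n : ℕ) (a : ℕ → ℕ) (m : ℤ) : ℤ :=
  if 0 ≤ m then ((sumset n a m.toNat).ncard : ℤ) else 0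

lemma sumset_zero (n : ℕ) (a : ℕ → ℕ) : sumset n a 0 = {0} := by
  ext x
  constructor
  · rintro ⟨f, -, rfl⟩; simp
  · rintro rfl; exact ⟨Fin.elim0, fun i => i.elim0, by simp⟩

lemma mem_sumset_succ {n : ℕ} {a : ℕ → ℕ} {s x : ℕ} :
    x ∈ sumset n a (s + 1) ↔ ∃ i < n, ∃ y ∈ sumset n a s, x = a i + y := by
  constructor
  · rintro ⟨f, hf, rfl⟩
    exact ⟨f 0, hf 0, ∑ i : Fin s, a (f i.succ),
      ⟨fun i => f i.succ, fun i => hf _, rfl⟩, by rw [Fin.sum_univ_succ]⟩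
  · rintro ⟨i, hi, y, ⟨g, hg, rfl⟩, rfl⟩
    refine ⟨Fin.cons i g, ?_, ?_⟩
    · intro j
      induction j using Fin.cases with
      | zero => simpa using hi
      | succ j => simpa using hg j
    · simp [Fin.sum_univ_succ]

lemma sumset_add {n : ℕ} {a : ℕ → ℕ} {s t x y : ℕ}
    (hx : x ∈ sumset n a s) (hy : y ∈ sumset n a t) : x + y ∈ sumset n a (s + t) := by
  induction s generalizing x with
  | zero =>
    rw [sumset_zero] at hx
    simp only [Set.mem_singleton_iff] at hx
    subst hx; simpa using hy
  | succ s ih =>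
    obtain ⟨i, hi, z, hz, rfl⟩ := mem_sumset_succ.mp hx
    have h : s + 1 + t = (s + t) + 1 := by omega
    rw [h]
    exact mem_sumset_succ.mpr ⟨i, hi, z + y, ih hz, add_assoc _ _ _⟩

lemma sumset_le {n d : ℕ} {a : ℕ → ℕ} (hle : ∀ i < n, a i ≤ d) :
    ∀ {s x}, x ∈ sumset n a s → x ≤ s * d := by
  intro s
  induction s with
  | zero => intro x hx; rw [sumset_zero] at hx; simp_all
  | succ s ih =>
    intro x hx
    obtain ⟨i, hi, y, hy, rfl⟩ := mem_sumset_succ.mp hx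
    have h1 := ih hy
    have h2 := hle i hi
    have h3 : (s + 1) * d = s * d + d := by ring
    rw [h3]; omega

lemma mem_sumset_single {n : ℕ} {a : ℕ → ℕ} {i : ℕ} (hi : i < n) : a i ∈ sumset n a 1 :=
  ⟨fun _ => i, fun _ => hi, by simp⟩

lemma zero_mem_sumset {n : ℕ} {a : ℕ → ℕ} (hn : 0 < n) (ha0 : a 0 = 0) (s : ℕ) :
    0 ∈ sumset n a s := ⟨fun _ => 0, fun _ => hn, by simp [ha0]⟩

lemma sumset_subset_succ {n : ℕ} {a : ℕ → ℕ} (hn : 0 < n) (ha0 : a 0 = 0) {s x : ℕ}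
    (hx : x ∈ sumset n a s) : x ∈ sumset n a (s + 1) := by
  simpa using sumset_add hx (zero_mem_sumset hn ha0 1)

lemma mem_SS_of {n d : ℕ} {a : ℕ → ℕ} (hle : ∀ i < n, a i ≤ d) :
    ∀ (s x y : ℕ), x ∈ sumset n a s → x + y = s * d → (x, y) ∈ SS n d a := by
  intro s
  induction s with
  | zero =>
    intro x y hx h
    rw [sumset_zero] at hx
    simp only [Set.mem_singleton_iff] at hx
    subst hx
    simp only [zero_mul] at h
    have hy : y = 0 := by omega
    subst hy
    exact AddSubmonoid.zero_mem _
  | succ s ih =>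
    intro x y hx h
    obtain ⟨i, hi, z, hz, rfl⟩ := mem_sumset_succ.mp hx
    have hz' : z ≤ s * d := sumset_le hle hz
    have hai : a i ≤ d := hle i hi
    have hmul : (s + 1) * d = s * d + d := by ring
    rw [hmul] at h
    have hq : (z, s * d - z) ∈ SS n d a := ih z _ hz (by omega)
    have hg : ((a i, d - a i) : ℕ × ℕ) ∈ SS n d a :=
      AddSubmonoid.subset_closure ⟨i, hi, rfl⟩
    have heq : ((a i, d - a i) : ℕ × ℕ) + (z, s * d - z) = (a i + z, y) := by
      have : (d - a i) + (s * d - z) = y := by omega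
      simp [Prod.ext_iff, this]
    have := AddSubmonoid.add_mem _ (hg : _ ∈ AddSubmonoid.closure _) hq
    rw [heq] at this
    exact this

lemma SS_mem_iff {n d : ℕ} {a : ℕ → ℕ} (hle : ∀ i < n, a i ≤ d) {p : ℕ × ℕ} :
    p ∈ SS n d a ↔ ∃ s, p.1 ∈ sumset n a s ∧ p.1 + p.2 = s * d := by
  constructor
  · intro hp
    have hp' : p ∈ AddSubmonoid.closure {p : ℕ × ℕ | ∃ i < n, p = (a i, d - a i)} := hp
    clear hp
    induction hp' using AddSubmonoid.closure_induction with
    | mem q hq =>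
      obtain ⟨i, hi, rfl⟩ := hq
      refine ⟨1, mem_sumset_single hi, ?_⟩
      have := hle i hi
      simp only [one_mul]
      omega
    | zero => exact ⟨0, by rw [sumset_zero]; simp⟩
    | add q r hq hr ihq ihr =>
      obtain ⟨s, hs1, hs2⟩ := ihq
      obtain ⟨t, ht1, ht2⟩ := ihr
      refine ⟨s + t, sumset_add hs1 ht1, ?_⟩
      show q.1 + r.1 + (q.2 + r.2) = _
      rw [add_mul, ← hs2, ← ht2]
      ring
  · rintro ⟨s, hx, hsum⟩
    have := mem_SS_of hle s p.1 p.2 hx hsum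
    simpa using this

lemma level_mem {n d : ℕ} {a : ℕ → ℕ} (hd : 0 < d) (hle : ∀ i < n, a i ≤ d)
    {s : ℕ} {p : ℕ × ℕ} (hlev : p.1 + p.2 = s * d) :
    p ∈ SS n d a ↔ p.1 ∈ sumset n a s := by
  rw [SS_mem_iff hle]
  constructor
  · rintro ⟨t, hx, ht⟩
    have hts : t = s := Nat.eq_of_mul_eq_mul_right hd (ht ▸ hlev)
    exact hts ▸ hx
  · intro hx; exact ⟨s, hx, hlev⟩

lemma shift_mem_iff {n d : ℕ} {a : ℕ → ℕ} (hd : 0 < d) (hle : ∀ i < n, a i ≤ d)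
    {s k : ℕ} {p : ℕ × ℕ} (hlev : p.1 + p.2 = s * d) (u v : ℕ) (huv : u + v = k * d) :
    (∃ q ∈ SS n d a, q + (u, v) = p) ↔
      (k ≤ s ∧ u ≤ p.1 ∧ v ≤ p.2 ∧ p.1 - u ∈ sumset n a (s - k)) := by
  constructor
  · rintro ⟨q, hq, rfl⟩
    obtain ⟨t, ht1, ht2⟩ := (SS_mem_iff hle).mp hq
    simp only [Prod.fst_add, Prod.snd_add] at hlev ⊢
    have hts : t + k = s := by
      apply Nat.eq_of_mul_eq_mul_right hd
      rw [add_mul, ← ht2, ← huv]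
      omega
    have hks : k ≤ s := by omega
    have hsk : s - k = t := by omega
    refine ⟨hks, by omega, by omega, ?_⟩
    rw [hsk]
    have : q.1 + u - u = q.1 := by omega
    rw [this]
    exact ht1
  · rintro ⟨hks, hu, hv, hmem⟩
    refine ⟨(p.1 - u, p.2 - v), ?_, ?_⟩
    · apply mem_SS_of hle
      · exact hmem
      · have h1 : (s - k) * d + k * d = s * d := by
          rw [← add_mul]
          congr 1
          omega
        omega
    · have : ((p.1 - u, p.2 - v) : ℕ × ℕ) + (u, v) = (p.1, p.2) := by
        simp [Prod.ext_iff]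
        omega
      simpa using this


theorem levels_apsE (n d : ℕ) (a : ℕ → ℕ)
    (hn : 4 ≤ n)
    (ha0 : a 0 = 0)
    (had : a (n - 1) = d)
    (hmono : ∀ i j, i < j → j ≤ n - 1 → a i < a j)
    (hgcd : (Finset.Icc 1 (n - 1)).gcd a = 1) :
    ∀ s : ℕ,
      ((APs n d a s).ncard : ℤ) - ((Es n d a s).ncard : ℤ)
        = nAZ n a (s : ℤ) - 2 * nAZ n a ((s : ℤ) - 1) + nAZ n a ((s : ℤ) - 2) := by
  have hn0 : 0 < n := by omega
  have hd : 0 < d := by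
    have h := hmono 0 (n - 1) (by omega) (le_refl _)
    rw [ha0, had] at h
    exact h
  have hle : ∀ i < n, a i ≤ d := by
    intro i hi
    rcases Nat.lt_or_ge i (n - 1) with h | h
    · have := hmono i (n - 1) h (le_refl _)
      rw [had] at this
      omega
    · have hieq : i = n - 1 := by omega
      rw [hieq, had]
  have hdmem : d ∈ sumset n a 1 := had ▸ mem_sumset_single (show n - 1 < n by omega)
  intro s
  -- the distinguished subsets of U = sA
  set U : Set ℕ := sumset n a s with hUdef
  set B : Set ℕ := {x ∈ U | 1 ≤ s ∧ x ∈ sumset n a (s - 1)} with hBdef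
  set C : Set ℕ := {x ∈ U | 1 ≤ s ∧ d ≤ x ∧ x - d ∈ sumset n a (s - 1)} with hCdef
  set D : Set ℕ := {x ∈ U | 2 ≤ s ∧ d ≤ x ∧ x - d ∈ sumset n a (s - 2)} with hDdef
  -- characterizations of the shift conditions on the level s
  have hs1 : 1 ≤ s → (s - 1) * d + d = s * d := by
    intro h
    have h1 : s - 1 + 1 = s := by omega
    calc (s - 1) * d + d = (s - 1 + 1) * d := by ring
    _ = s * d := by rw [h1]
  have hs2 : 2 ≤ s → (s - 2) * d + (d + d) = s * d := by
    intro h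
    have h1 : s - 2 + 2 = s := by omega
    calc (s - 2) * d + (d + d) = (s - 2 + 2) * d := by ring
    _ = s * d := by rw [h1]
  have hBiff : ∀ p : ℕ × ℕ, p.1 + p.2 = s * d →
      ((∃ q ∈ SS n d a, q + (0, d) = p) ↔ (1 ≤ s ∧ p.1 ∈ sumset n a (s - 1))) := by
    intro p hlev
    rw [shift_mem_iff (k := 1) hd hle hlev 0 d (by ring)]
    constructor
    · rintro ⟨h1, -, -, h4⟩
      refine ⟨h1, ?_⟩
      simpa using h4
    · rintro ⟨h1, h2⟩
      have hx : p.1 ≤ (s - 1) * d := sumset_le hle h2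
      have hss := hs1 h1
      exact ⟨h1, Nat.zero_le _, by omega, by simpa using h2⟩
  have hCiff : ∀ p : ℕ × ℕ, p.1 + p.2 = s * d →
      ((∃ q ∈ SS n d a, q + (d, 0) = p) ↔
        (1 ≤ s ∧ d ≤ p.1 ∧ p.1 - d ∈ sumset n a (s - 1))) := by
    intro p hlev
    rw [shift_mem_iff (k := 1) hd hle hlev d 0 (by ring)]
    constructor
    · rintro ⟨h1, h2, -, h4⟩
      exact ⟨h1, h2, h4⟩
    · rintro ⟨h1, h2, h3⟩
      exact ⟨h1, h2, Nat.zero_le _, h3⟩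
  have hDiff : ∀ p : ℕ × ℕ, p.1 + p.2 = s * d →
      ((∃ q ∈ SS n d a, q + (d, d) = p) ↔
        (2 ≤ s ∧ d ≤ p.1 ∧ p.1 - d ∈ sumset n a (s - 2))) := by
    intro p hlev
    rw [shift_mem_iff (k := 2) hd hle hlev d d (by ring)]
    constructor
    · rintro ⟨h1, h2, -, h4⟩
      exact ⟨h1, h2, h4⟩
    · rintro ⟨h1, h2, h3⟩
      have hx : p.1 - d ≤ (s - 2) * d := sumset_le hle h3
      have hss := hs2 h1
      exact ⟨h1, h2, by omega, h3⟩
  -- injectivity of the first projection on the level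
  have injLev : Set.InjOn Prod.fst (Lev d s) := by
    rintro p hp q hq h
    have hp' : p.1 + p.2 = s * d := hp
    have hq' : q.1 + q.2 = s * d := hq
    exact Prod.ext_iff.mpr ⟨h, by omega⟩
  have hAPsub : APs n d a s ⊆ Lev d s := Set.inter_subset_right
  have hEsub : Es n d a s ⊆ Lev d s := Set.inter_subset_right
  -- image descriptions
  have hAPimg : Prod.fst '' APs n d a s = U \ (B ∪ C) := by
    ext x
    constructor
    · rintro ⟨p, ⟨⟨hpS, hnB, hnC⟩, hplev⟩, rfl⟩
      have hlev : p.1 + p.2 = s * d := hplev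
      have hxU : p.1 ∈ U := (level_mem hd hle hlev).mp hpS
      refine ⟨hxU, ?_⟩
      rintro (⟨-, hq1, hq2⟩ | ⟨-, hq1, hq2, hq3⟩)
      · exact hnB ((hBiff p hlev).mpr ⟨hq1, hq2⟩)
      · exact hnC ((hCiff p hlev).mpr ⟨hq1, hq2, hq3⟩)
    · rintro ⟨hxU, hxn⟩
      have hxle : x ≤ s * d := sumset_le hle hxU
      refine ⟨(x, s * d - x), ⟨⟨?_, ?_, ?_⟩, ?_⟩, rfl⟩
      · exact (level_mem hd hle (show x + (s * d - x) = s * d by omega)).mpr hxU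
      · intro hq
        obtain ⟨h1, h2⟩ := (hBiff _ (show x + (s * d - x) = s * d by omega)).mp hq
        exact hxn (Or.inl ⟨hxU, h1, h2⟩)
      · intro hq
        obtain ⟨h1, h2, h3⟩ := (hCiff _ (show x + (s * d - x) = s * d by omega)).mp hq
        exact hxn (Or.inr ⟨hxU, h1, h2, h3⟩)
      · exact (show x + (s * d - x) = s * d by omega)
  have hEimg : Prod.fst '' Es n d a s = (B ∩ C) \ D := by
    ext x
    constructor
    · rintro ⟨p, ⟨⟨hpS, hq1, hq2, hq3⟩, hplev⟩, rfl⟩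
      have hlev : p.1 + p.2 = s * d := hplev
      have hxU : p.1 ∈ U := (level_mem hd hle hlev).mp hpS
      obtain ⟨hb1, hb2⟩ := (hBiff p hlev).mp hq1
      obtain ⟨hc1, hc2, hc3⟩ := (hCiff p hlev).mp hq2
      refine ⟨⟨⟨hxU, hb1, hb2⟩, ⟨hxU, hc1, hc2, hc3⟩⟩, ?_⟩
      rintro ⟨-, hd1, hd2, hd3⟩
      exact hq3 ((hDiff p hlev).mpr ⟨hd1, hd2, hd3⟩)
    · rintro ⟨⟨⟨hxU, hb1, hb2⟩, ⟨-, hc1, hc2, hc3⟩⟩, hxnD⟩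
      have hxle : x ≤ s * d := sumset_le hle hxU
      have hlev : x + (s * d - x) = s * d := by omega
      refine ⟨(x, s * d - x), ⟨⟨?_, ?_, ?_, ?_⟩, hlev⟩, rfl⟩
      · exact (level_mem hd hle hlev).mpr hxU
      · exact (hBiff _ hlev).mpr ⟨hb1, hb2⟩
      · exact (hCiff _ hlev).mpr ⟨hc1, hc2, hc3⟩
      · intro hq
        obtain ⟨h1, h2, h3⟩ := (hDiff _ hlev).mp hq
        exact hxnD ⟨hxU, h1, h2, h3⟩
  -- finiteness
  have hUfin : U.Finite := (Set.finite_Iic (s * d)).subset fun x hx => sumset_le hle hx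
  have hBfin : B.Finite := hUfin.subset fun x hx => hx.1
  have hCfin : C.Finite := hUfin.subset fun x hx => hx.1
  have hDfin : D.Finite := hUfin.subset fun x hx => hx.1
  -- subset relations
  have hBCU : B ∪ C ⊆ U := Set.union_subset (fun x hx => hx.1) (fun x hx => hx.1)
  have hDBC : D ⊆ B ∩ C := by
    rintro x ⟨hxU, h2, hdx, hmem⟩
    have h21 : s - 2 + 1 = s - 1 := by omega
    constructor
    · refine ⟨hxU, by omega, ?_⟩
      have h := sumset_add hmem hdmem
      rw [h21] at h
      have hx : x - d + d = x := by omega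
      rwa [hx] at h
    · refine ⟨hxU, by omega, hdx, ?_⟩
      have h := sumset_subset_succ hn0 ha0 hmem
      rwa [h21] at h
  -- counting
  have e1 : (U \ (B ∪ C)).ncard + (B ∪ C).ncard = U.ncard :=
    Set.ncard_diff_add_ncard_of_subset hBCU hUfin
  have e2 : ((B ∩ C) \ D).ncard + D.ncard = (B ∩ C).ncard :=
    Set.ncard_diff_add_ncard_of_subset hDBC (hBfin.inter_of_left C)
  have e3 : (B ∪ C).ncard + (B ∩ C).ncard = B.ncard + C.ncard :=
    Set.ncard_union_add_ncard_inter B C hBfin hCfin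
  have eAP : (APs n d a s).ncard = (U \ (B ∪ C)).ncard := by
    rw [← hAPimg, Set.ncard_image_of_injOn (injLev.mono hAPsub)]
  have eE : (Es n d a s).ncard = ((B ∩ C) \ D).ncard := by
    rw [← hEimg, Set.ncard_image_of_injOn (injLev.mono hEsub)]
  -- identification of the cardinalities with nAZ values
  have hUval : nAZ n a (s : ℤ) = (U.ncard : ℤ) := by
    simp [nAZ, hUdef]
  have hBval : (B.ncard : ℤ) = nAZ n a ((s : ℤ) - 1) := by
    rcases Nat.eq_zero_or_pos s with hs | hs
    · have hBempty : B = ∅ :=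
        Set.eq_empty_iff_forall_notMem.mpr fun x hx => by have := hx.2.1; omega
      rw [hBempty, hs]
      simp [nAZ]
    · have hBeq : B = sumset n a (s - 1) := by
        ext x
        constructor
        · exact fun hx => hx.2.2
        · intro hx
          refine ⟨?_, hs, hx⟩
          have h := sumset_subset_succ hn0 ha0 hx
          have h1 : s - 1 + 1 = s := by omega
          rwa [h1] at h
      rw [hBeq]
      have h0 : (0 : ℤ) ≤ (s : ℤ) - 1 := by omega
      rw [nAZ, if_pos h0]
      have ht : ((s : ℤ) - 1).toNat = s - 1 := by omega
      rw [ht]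
  have hCval : (C.ncard : ℤ) = nAZ n a ((s : ℤ) - 1) := by
    rcases Nat.eq_zero_or_pos s with hs | hs
    · have hCempty : C = ∅ :=
        Set.eq_empty_iff_forall_notMem.mpr fun x hx => by have := hx.2.1; omega
      rw [hCempty, hs]
      simp [nAZ]
    · have hCeq : C = (fun z => z + d) '' sumset n a (s - 1) := by
        ext x
        constructor
        · rintro ⟨hxU, -, hdx, hmem⟩
          exact ⟨x - d, hmem, show x - d + d = x by omega⟩
        · rintro ⟨z, hz, rfl⟩
          have hU : z + d ∈ U := by
            have h := sumset_add hz hdmem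
            have h1 : s - 1 + 1 = s := by omega
            rwa [h1] at h
          exact ⟨hU, hs, show d ≤ z + d by omega, show z + d - d ∈ _ by simpa using hz⟩
      rw [hCeq, Set.ncard_image_of_injective _ (add_left_injective d)]
      have h0 : (0 : ℤ) ≤ (s : ℤ) - 1 := by omega
      rw [nAZ, if_pos h0]
      have ht : ((s : ℤ) - 1).toNat = s - 1 := by omega
      rw [ht]
  have hDval : (D.ncard : ℤ) = nAZ n a ((s : ℤ) - 2) := by
    rcases Nat.lt_or_ge s 2 with hs | hs
    · have hDempty : D = ∅ :=
        Set.eq_empty_iff_forall_notMem.mpr fun x hx => by have := hx.2.1; omega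
      rw [hDempty]
      have h0 : ¬ (0 : ℤ) ≤ (s : ℤ) - 2 := by omega
      rw [nAZ, if_neg h0]
      simp
    · have hDeq : D = (fun z => z + d) '' sumset n a (s - 2) := by
        ext x
        constructor
        · rintro ⟨hxU, -, hdx, hmem⟩
          exact ⟨x - d, hmem, show x - d + d = x by omega⟩
        · rintro ⟨z, hz, rfl⟩
          have hU : z + d ∈ U := by
            have h := sumset_add hz hdmem
            have h1 : s - 2 + 1 = s - 1 := by omega
            rw [h1] at h
            have h2 := sumset_subset_succ hn0 ha0 h
            have h3 : s - 1 + 1 = s := by omega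
            rwa [h3] at h2
          exact ⟨hU, hs, show d ≤ z + d by omega, show z + d - d ∈ _ by simpa using hz⟩
      rw [hDeq, Set.ncard_image_of_injective _ (add_left_injective d)]
      have h0 : (0 : ℤ) ≤ (s : ℤ) - 2 := by omega
      rw [nAZ, if_pos h0]
      have ht : ((s : ℤ) - 2).toNat = s - 2 := by omega
      rw [ht]
  -- put everything together
  have E1 : ((APs n d a s).ncard : ℤ) + ((B ∪ C).ncard : ℤ) = (U.ncard : ℤ) := by
    rw [eAP]; exact_mod_cast e1
  have E2 : ((Es n d a s).ncard : ℤ) + (D.ncard : ℤ) = ((B ∩ C).ncard : ℤ) := by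
    rw [eE]; exact_mod_cast e2
  have E3 : ((B ∪ C).ncard : ℤ) + ((B ∩ C).ncard : ℤ) = (B.ncard : ℤ) + (C.ncard : ℤ) := by
    exact_mod_cast e3
  rw [hUval]
  linarith [hBval, hCval, hDval, E1, E2, E3]

end SumsetsCurve
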